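/- The decision map that selects the lexicographically first set among the maximal sets of the demand correspondence D(v;p) = argmax_S (v(S) - p(S)) is up-consistent: if X(p) = S, i ∈ S, and p'_i > p_i, then either X(p'_i, p_{-i}) = S or i ∉ X(p'_i, p_{-i}). -/

import Mathlib

/-- The decision map selecting the first set (with respect to a
fixed linear order on subsets, encoded by an injection `e` into ℕ) among the
maximal sets of the demand correspondence is up-consistent: if `X p = S`,
`i ∈ S` and `p'_i > p_i`, then either `X (p'_i, p_{-i}) = S` or
`i ∉ X (p'_i, p_{-i})`. -/
theorem stmt12 {n : ℕ} (v : Finset (Fin n) → ℝ)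
    (hmono : ∀ S T : Finset (Fin n), S ⊆ T → v S ≤ v T)
    (e : Finset (Fin n) → ℕ) (he : Function.Injective e)
    (X : (Fin n → ℝ) → Finset (Fin n))
    (hXd : ∀ q : Fin n → ℝ, ∀ T : Finset (Fin n),
      v T - ∑ i ∈ T, q i ≤ v (X q) - ∑ i ∈ X q, q i)
    (hXmax : ∀ q : Fin n → ℝ, ∀ T : Finset (Fin n),
      (∀ U : Finset (Fin n), v U - ∑ i ∈ U, q i ≤ v T - ∑ i ∈ T, q i) →
      ¬ X q ⊂ T)
    (hXfirst : ∀ q : Fin n → ℝ, ∀ T : Finset (Fin n),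
      (∀ U : Finset (Fin n), v U - ∑ i ∈ U, q i ≤ v T - ∑ i ∈ T, q i) →
      (∀ U : Finset (Fin n),
        (∀ W : Finset (Fin n), v W - ∑ i ∈ W, q i ≤ v U - ∑ i ∈ U, q i) →
        ¬ T ⊂ U) →
      e (X q) ≤ e T) :
    ∀ p : Fin n → ℝ, ∀ i : Fin n, i ∈ X p → ∀ q : ℝ, p i < q →
      X (Function.update p i q) = X p ∨ i ∉ X (Function.update p i q) := by
  intro p i hiS q hpq
  set p' : Fin n → ℝ := Function.update p i q with hp'
  by_cases hiS' : i ∈ X p'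
  · left
    -- sum lemmas
    have hsum_mem : ∀ T : Finset (Fin n), i ∈ T →
        ∑ j ∈ T, p' j = (∑ j ∈ T, p j) + (q - p i) := by
      intro T hiT
      rw [hp', Finset.sum_update_of_mem hiT,
        ← Finset.sum_erase_add T p hiT, Finset.sdiff_singleton_eq_erase]
      ring
    have hsum_not : ∀ T : Finset (Fin n), i ∉ T →
        ∑ j ∈ T, p' j = ∑ j ∈ T, p j := by
      intro T hiT
      exact Finset.sum_congr rfl fun j hj => Function.update_of_ne
        (by rintro rfl; exact hiT hj) _ _
    set S := X p with hS
    set S' := X p' with hS'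
    set δ := q - p i with hδ
    -- value of S' at p: S' optimal at p
    have h1 : v S - ∑ j ∈ S, p j ≤ v S' - ∑ j ∈ S', p j := by
      have := hXd p' S
      rw [hsum_mem S hiS, hsum_mem S' hiS'] at this
      linarith
    have h2 : v S' - ∑ j ∈ S', p j ≤ v S - ∑ j ∈ S, p j := hXd p S'
    have hval : v S' - ∑ j ∈ S', p j = v S - ∑ j ∈ S, p j := le_antisymm h2 h1
    -- S' optimal at p
    have hS'opt : ∀ U : Finset (Fin n),
        v U - ∑ j ∈ U, p j ≤ v S' - ∑ j ∈ S', p j := fun U => hval ▸ hXd p U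
    -- S optimal at p'
    have hvalp' : v S - ∑ j ∈ S, p' j = v S' - ∑ j ∈ S', p' j := by
      rw [hsum_mem S hiS, hsum_mem S' hiS']; linarith
    have hSopt : ∀ U : Finset (Fin n),
        v U - ∑ j ∈ U, p' j ≤ v S - ∑ j ∈ S, p' j :=
      fun U => hvalp' ▸ hXd p' U
    -- S' maximal at p
    have hS'max : ∀ U : Finset (Fin n),
        (∀ W : Finset (Fin n), v W - ∑ j ∈ W, p j ≤ v U - ∑ j ∈ U, p j) →
        ¬ S' ⊂ U := by
      intro U hU hss
      have hiU : i ∈ U := hss.subset hiS'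
      -- U optimal at p', contradiction with hXmax p' U
      have hUval : v U - ∑ j ∈ U, p j = v S - ∑ j ∈ S, p j :=
        le_antisymm (hXd p U) (hval ▸ hU S')
      have : ∀ W : Finset (Fin n),
          v W - ∑ j ∈ W, p' j ≤ v U - ∑ j ∈ U, p' j := by
        intro W
        calc v W - ∑ j ∈ W, p' j ≤ v S - ∑ j ∈ S, p' j := hSopt W
        _ = v U - ∑ j ∈ U, p' j := by
            rw [hsum_mem S hiS, hsum_mem U hiU]; linarith
      exact hXmax p' U this hss
    -- S maximal at p'
    have hSmax : ∀ U : Finset (Fin n),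
        (∀ W : Finset (Fin n), v W - ∑ j ∈ W, p' j ≤ v U - ∑ j ∈ U, p' j) →
        ¬ S ⊂ U := by
      intro U hU hss
      have hiU : i ∈ U := hss.subset hiS
      have hUval' : v U - ∑ j ∈ U, p' j = v S - ∑ j ∈ S, p' j :=
        le_antisymm (hSopt U) (hU S)
      have : ∀ W : Finset (Fin n),
          v W - ∑ j ∈ W, p j ≤ v U - ∑ j ∈ U, p j := by
        intro W
        calc v W - ∑ j ∈ W, p j ≤ v S - ∑ j ∈ S, p j := hXd p W
        _ = v U - ∑ j ∈ U, p j := by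
            have := hUval'
            rw [hsum_mem S hiS, hsum_mem U hiU] at this; linarith
      exact hXmax p U this hss
    have e1 : e S ≤ e S' := hXfirst p S' hS'opt hS'max
    have e2 : e S' ≤ e S := hXfirst p' S hSopt hSmax
    exact he (le_antisymm e2 e1)
  · right; exact hiS'
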